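/- Let v : [0,1]^m → ℝ≥0 be a linear valuation function, i.e., v(x) = Σ_{j=1}^m v_j x_j with v_j ≥ 0. Let p : [0,1]^m → ℝ≥0 be an MLC pricing function, let p̂ = conv(p), and let x̂ ∈ [0,1]^m. Then there exists x* ∈ [0,1]^m such that p(x*) = p̂(x*) and v(x*) − p̂(x*) ≥ v(x̂) − p̂(x̂). -/

import Mathlib

noncomputable section

/-- The unit cube `[0,1]^m` in `Fin m → ℝ`. -/
def cube (m : ℕ) : Set (Fin m → ℝ) := Set.Icc 0 1

/-- The lower limit of `f` at `x₀` relative to the domain `D` (in the extended reals). -/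
def lowerLim {E : Type*} [SeminormedAddCommGroup E] (D : Set E) (f : E → ℝ) (x₀ : E) : EReal :=
  ⨆ δ : {δ : ℝ // 0 < δ}, ⨅ x : {x : E // x ∈ D ∧ ‖x - x₀‖ ≤ δ.1}, (f x.1 : EReal)

/-- `f` is lower-continuous on `D`. -/
def LowerContOn {E : Type*} [SeminormedAddCommGroup E] (D : Set E) (f : E → ℝ) : Prop :=
  ∀ x₀ ∈ D, lowerLim D f x₀ = (f x₀ : EReal)

/-- The epigraph of `f` relative to the domain `D`. -/
def epigraph {E : Type*} (D : Set E) (f : E → ℝ) : Set (E × ℝ) :=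
  {q | q.1 ∈ D ∧ f q.1 ≤ q.2}

/-- The convex hull of a function: `conv(f)(x) = inf {y : (x,y) ∈ conv(epi f)}`. -/
def funConvHull {E : Type*} [AddCommGroup E] [Module ℝ E] (D : Set E) (f : E → ℝ) : E → ℝ :=
  fun x => sInf {y : ℝ | (x, y) ∈ convexHull ℝ (epigraph D f)}

lemma lc_to_lsc {E : Type*} [SeminormedAddCommGroup E] {D : Set E} {f : E → ℝ}
    (h : LowerContOn D f) : LowerSemicontinuousOn f D := by
  intro x hx c hc
  have h1 : (c : EReal) < lowerLim D f x := by
    rw [h x hx]; exact_mod_cast hc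
  rw [lowerLim, lt_iSup_iff] at h1
  obtain ⟨⟨δ, hδ⟩, hδ2⟩ := h1
  filter_upwards [self_mem_nhdsWithin,
    mem_nhdsWithin_of_mem_nhds (Metric.ball_mem_nhds x hδ)] with y hyD hyb
  have : (c : EReal) < (f y : EReal) := by
    refine lt_of_lt_of_le hδ2 (iInf_le _ (⟨y, hyD, ?_⟩ : {x' : E // x' ∈ D ∧ ‖x' - x‖ ≤ δ}))
    rw [← dist_eq_norm]
    exact le_of_lt (Metric.mem_ball.1 hyb)
  exact_mod_cast this

lemma exists_min {E : Type*} [TopologicalSpace E] {K : Set E} (hK : IsCompact K)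
    (hne : K.Nonempty) {g : E → ℝ} (hg : LowerSemicontinuousOn g K) :
    ∃ x ∈ K, ∀ y ∈ K, g x ≤ g y := by
  by_contra hcon
  push_neg at hcon
  set a : EReal := ⨅ y : K, (g y : EReal) with ha_def
  have ha : ∀ x ∈ K, a < (g x : EReal) := by
    intro x hx
    rcases hcon x hx with ⟨y, hy, hlt⟩
    calc a ≤ (g y : EReal) := iInf_le _ (⟨y, hy⟩ : K)
    _ < (g x : EReal) := by exact_mod_cast hlt
  have key : ∀ x ∈ K, ∃ c : ℝ, a < (c : EReal) ∧ c < g x := by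
    intro x hx
    obtain ⟨z, hz1, hz2⟩ := exists_between (ha x hx)
    have hzbot : z ≠ ⊥ := fun h => absurd (h ▸ hz1) (by simp)
    have hztop : z ≠ ⊤ := fun h => absurd (h ▸ hz2) (by simp)
    refine ⟨z.toReal, ?_, ?_⟩
    · rwa [EReal.coe_toReal hztop hzbot]
    · have h2 := hz2
      rw [← EReal.coe_toReal hztop hzbot] at h2
      exact_mod_cast h2
  choose! c hc1 hc2 using key
  have hU : ∀ x ∈ K, ∃ u : Set E, IsOpen u ∧ x ∈ u ∧ ∀ y ∈ u ∩ K, c x < g y := by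
    intro x hx
    have hev := hg x hx (c x) (hc2 x hx)
    rw [Filter.eventually_iff, mem_nhdsWithin] at hev
    obtain ⟨u, hu1, hu2, hu3⟩ := hev
    exact ⟨u, hu1, hu2, fun y hy => hu3 hy⟩
  choose! U hUopen hxU hUsub using hU
  obtain ⟨t, htK, htcov⟩ := hK.elim_nhds_subcover U (fun x hx => (hUopen x hx).mem_nhds (hxU x hx))
  obtain ⟨y0, hy0⟩ := hne
  have htne : t.Nonempty := by
    rcases Set.mem_iUnion₂.1 (htcov hy0) with ⟨x, hxt, _⟩
    exact ⟨x, hxt⟩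
  set cs := t.inf' htne c with hcs
  have hlb : ∀ y ∈ K, cs ≤ g y := by
    intro y hy
    rcases Set.mem_iUnion₂.1 (htcov hy) with ⟨x, hxt, hyU⟩
    have := hUsub x (htK x hxt) y ⟨hyU, hy⟩
    exact le_of_lt (lt_of_le_of_lt (Finset.inf'_le c hxt) this)
  have h1 : (cs : EReal) ≤ a := le_iInf fun y => by exact_mod_cast hlb y y.2
  obtain ⟨x0, hx0t, hx0⟩ := Finset.exists_mem_eq_inf' htne c
  have h2 : a < (cs : EReal) := by rw [hcs, hx0]; exact hc1 x0 (htK x0 hx0t)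
  exact absurd (lt_of_lt_of_le h2 h1) (lt_irrefl a)


/-- Let `v x = ∑ j, vcoef j * x j` be a linear valuation with
nonnegative coefficients, let `p` be an MLC pricing function on `[0,1]^m`, let
`p̂ = conv p`, and let `x̂ ∈ [0,1]^m`. Then there is `x* ∈ [0,1]^m` with
`p x* = p̂ x*` and `v x* - p̂ x* ≥ v x̂ - p̂ x̂`. -/
theorem stmt4 (m : ℕ) (vcoef : Fin m → ℝ) (hv : ∀ j, 0 ≤ vcoef j)
    (p : (Fin m → ℝ) → ℝ) (hp_nonneg : ∀ x ∈ cube m, 0 ≤ p x) (hp0 : p 0 = 0)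
    (hp_mono : MonotoneOn p (cube m)) (hp_lc : LowerContOn (cube m) p)
    (xhat : Fin m → ℝ) (hxhat : xhat ∈ cube m) :
    ∃ xstar ∈ cube m,
      p xstar = funConvHull (cube m) p xstar ∧
      (∑ j, vcoef j * xstar j) - funConvHull (cube m) p xstar ≥
        (∑ j, vcoef j * xhat j) - funConvHull (cube m) p xhat := by
  classical
  set v : (Fin m → ℝ) → ℝ := fun x => ∑ j, vcoef j * x j with hv_def
  have hvcont : Continuous v := by
    apply continuous_finset_sum
    intro j _
    exact continuous_const.mul (continuous_apply j)
  have hKcomp : IsCompact (cube m) := isCompact_Icc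
  have hKne : (cube m).Nonempty := ⟨xhat, hxhat⟩
  have hg : LowerSemicontinuousOn (fun x => p x + (-v x)) (cube m) :=
    (lc_to_lsc hp_lc).add (hvcont.neg.continuousOn.lowerSemicontinuousOn)
  obtain ⟨xs, hxs, hmin⟩ := exists_min hKcomp hKne hg
  set M : ℝ := v xs - p xs with hM_def
  have hMmax : ∀ x ∈ cube m, v x - p x ≤ M := by
    intro x hx
    have := hmin x hx
    simp only [hM_def]; linarith
  -- the halfspace-type convex set
  set C : Set ((Fin m → ℝ) × ℝ) := {q | q.1 ∈ cube m ∧ v q.1 - q.2 ≤ M} with hC_def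
  have hvlin : ∀ (a b : ℝ) (x y : Fin m → ℝ), v (a • x + b • y) = a * v x + b * v y := by
    intro a b x y
    simp only [hv_def, Finset.mul_sum, ← Finset.sum_add_distrib]
    apply Finset.sum_congr rfl
    intro j _
    simp [Pi.add_apply, Pi.smul_apply, smul_eq_mul]
    ring
  have hCconv : Convex ℝ C := by
    intro q hq r hr a b ha hb hab
    constructor
    · exact (convex_Icc (0 : Fin m → ℝ) 1) hq.1 hr.1 ha hb hab
    · have h1 : (a • q + b • r).1 = a • q.1 + b • r.1 := rfl
      have h2 : (a • q + b • r).2 = a * q.2 + b * r.2 := rfl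
      rw [h1, h2, hvlin]
      have e1 := mul_le_mul_of_nonneg_left hq.2 ha
      have e2 := mul_le_mul_of_nonneg_left hr.2 hb
      have e3 : a * M + b * M = M := by rw [← add_mul, hab, one_mul]
      nlinarith
  have hepiC : epigraph (cube m) p ⊆ C := by
    rintro ⟨x, y⟩ ⟨hx, hy⟩
    exact ⟨hx, by have := hMmax x hx; simp only at *; linarith⟩
  have hhullC : convexHull ℝ (epigraph (cube m) p) ⊆ C := convexHull_min hepiC hCconv
  -- nonnegativity superset
  have hepiN : epigraph (cube m) p ⊆ (cube m) ×ˢ Set.Ici (0 : ℝ) := by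
    rintro ⟨x, y⟩ ⟨hx, hy⟩
    exact ⟨hx, le_trans (hp_nonneg x hx) hy⟩
  have hhullN : convexHull ℝ (epigraph (cube m) p) ⊆ (cube m) ×ˢ Set.Ici (0 : ℝ) :=
    convexHull_min hepiN ((convex_Icc 0 1).prod (convex_Ici 0))
  -- properties of funConvHull
  have hUne : ∀ x ∈ cube m, p x ∈ {y : ℝ | (x, y) ∈ convexHull ℝ (epigraph (cube m) p)} := by
    intro x hx
    exact subset_convexHull ℝ _ ⟨hx, le_refl _⟩
  have hUbdd : ∀ x : Fin m → ℝ, BddBelow {y : ℝ | (x, y) ∈ convexHull ℝ (epigraph (cube m) p)} := by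
    intro x
    exact ⟨0, fun y hy => (hhullN hy).2⟩
  have hle : ∀ x ∈ cube m, funConvHull (cube m) p x ≤ p x := by
    intro x hx
    exact csInf_le (hUbdd x) (hUne x hx)
  have hge : ∀ x ∈ cube m, v x - M ≤ funConvHull (cube m) p x := by
    intro x hx
    apply le_csInf ⟨p x, hUne x hx⟩
    intro y hy
    have := (hhullC hy).2
    linarith
  have heq : p xs = funConvHull (cube m) p xs := by
    have h1 := hle xs hxs
    have h2 := hge xs hxs
    simp only [hM_def] at h2
    linarith
  refine ⟨xs, hxs, heq, ?_⟩
  have h3 := hge xhat hxhat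
  have h4 := hle xhat hxhat
  have : v xhat - funConvHull (cube m) p xhat ≤ M := by linarith
  show v xs - funConvHull (cube m) p xs ≥ v xhat - funConvHull (cube m) p xhat
  rw [← heq]
  simp only [hM_def] at this
  linarith

end
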